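/- Let T > 0, let G be a symmetric invertible n×n real matrix, let X be an n×2 real matrix, set g := Xᵀ G X with det g < 0, let P := −T·√(−det g)·g⁻¹·Xᵀ·G and Π := P·G⁻¹·Pᵀ. Then det Π = T⁴ · det g, and consequently (1/T)·√(−det Π) = T·√(−det g); i.e. the De Donder–Weyl Hamiltonian H = −(1/T)√(−det Π) pulls back under the Legendre map to the Lagrangian energy E_𝓛 = −T√(−det g) of the Nambu–Goto string. -/

import Mathlib

open Matrix

/-- The induced worldsheet metric `g = Xᵀ G X` of the bosonic string, where `G` is the
spacetime metric and `X` the matrix of multivelocities `x^μ_a`. -/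
noncomputable def inducedMetric (n : ℕ) (G : Matrix (Fin n) (Fin n) ℝ)
    (X : Matrix (Fin n) (Fin 2) ℝ) : Matrix (Fin 2) (Fin 2) ℝ :=
  Xᵀ * G * X

/-- The image of the Nambu–Goto Legendre map: the multimomenta
`p^a_μ = −T·√(−det g)·G_{μν} g^{ba} x^ν_b`, i.e. `P = −T·√(−det g)·g⁻¹·Xᵀ·G`. -/
noncomputable def ngMomenta (n : ℕ) (T : ℝ) (G : Matrix (Fin n) (Fin n) ℝ)
    (X : Matrix (Fin n) (Fin 2) ℝ) : Matrix (Fin 2) (Fin n) ℝ :=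
  (-T * Real.sqrt (-(inducedMetric n G X).det)) • ((inducedMetric n G X)⁻¹ * Xᵀ * G)

/-- The matrix `Π^{ab} = G^{μν} p^a_μ p^b_ν`, i.e. `Π = P·G⁻¹·Pᵀ`. -/
noncomputable def ngPi (n : ℕ) (T : ℝ) (G : Matrix (Fin n) (Fin n) ℝ)
    (X : Matrix (Fin n) (Fin 2) ℝ) : Matrix (Fin 2) (Fin 2) ℝ :=
  ngMomenta n T G X * G⁻¹ * (ngMomenta n T G X)ᵀ

/-- For the Nambu–Goto string (tension `T > 0`, symmetric invertible spacetime metric `G`,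
multivelocities `X`, induced metric `g = Xᵀ G X` with `det g < 0`, multimomenta
`P = −T·√(−det g)·g⁻¹·Xᵀ·G`, `Π = P·G⁻¹·Pᵀ`), one has `det Π = T⁴·det g`, and
consequently `(1/T)·√(−det Π) = T·√(−det g)`: the De Donder–Weyl Hamiltonian
`H = −(1/T)√(−det Π)` pulls back under the Legendre map to the Lagrangian energy
`E_𝓛 = −T√(−det g)`. -/
theorem ngPi_det_and_hamiltonian
    (n : ℕ) (T : ℝ) (hT : 0 < T)
    (G : Matrix (Fin n) (Fin n) ℝ) (hGsymm : G.IsSymm) (hG : IsUnit G.det)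
    (X : Matrix (Fin n) (Fin 2) ℝ)
    (hg : (inducedMetric n G X).det < 0) :
    (ngPi n T G X).det = T ^ 4 * (inducedMetric n G X).det ∧
    (1 / T) * Real.sqrt (-(ngPi n T G X).det)
      = T * Real.sqrt (-(inducedMetric n G X).det) := by

  set g := inducedMetric n G X with hgdef
  have hgsymm : g.IsSymm := by
    rw [Matrix.IsSymm]
    simp [hgdef, inducedMetric, Matrix.transpose_mul, Matrix.mul_assoc, hGsymm.eq]
  have hgu : IsUnit g.det := isUnit_iff_ne_zero.mpr (ne_of_lt hg)
  set c : ℝ := -T * Real.sqrt (-g.det) with hc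
  have hPi : ngPi n T G X = (c ^ 2) • g⁻¹ := by
    rw [ngPi, ngMomenta]
    rw [Matrix.transpose_smul, Matrix.smul_mul, Matrix.smul_mul, Matrix.mul_smul,
      smul_smul, ← sq]
    congr 1
    rw [Matrix.transpose_mul, Matrix.transpose_mul, hGsymm.eq, Matrix.transpose_nonsing_inv,
      Matrix.transpose_transpose, show (inducedMetric n G X)ᵀ = g from hgsymm, ← hgdef]
    calc g⁻¹ * Xᵀ * G * G⁻¹ * (G * (X * g⁻¹))
        = g⁻¹ * Xᵀ * (G * G⁻¹ * G) * X * g⁻¹ := by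
          simp only [Matrix.mul_assoc]
      _ = g⁻¹ * (Xᵀ * G * X) * g⁻¹ := by
          rw [Matrix.mul_nonsing_inv _ hG, Matrix.one_mul]
          simp only [Matrix.mul_assoc]
      _ = g⁻¹ := by
          rw [show Xᵀ * G * X = g from rfl, Matrix.nonsing_inv_mul _ hgu, Matrix.one_mul]
  have hc2 : c ^ 2 = T ^ 2 * (-g.det) := by
    rw [hc, mul_pow, neg_pow, Real.sq_sqrt (by linarith)]
    ring
  have hdet : (ngPi n T G X).det = T ^ 4 * g.det := by
    have h0 : g.det ≠ 0 := ne_of_lt hg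
    rw [hPi, Matrix.det_smul, Matrix.det_nonsing_inv, Ring.inverse_eq_inv, Fintype.card_fin, hc2]
    field_simp
  refine ⟨hdet, ?_⟩
  rw [hdet]
  have : -(T ^ 4 * g.det) = (T ^ 2) ^ 2 * (-g.det) := by ring
  rw [this, Real.sqrt_mul (by positivity), Real.sqrt_sq (by positivity)]
  field_simp
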